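/- In a median graph G rooted at a vertex v0, an edge uv with d(v0,u) < d(v0,v) is closest to v0 within its Θ-class (i.e., v is the gate of v0 in the halfspace of the Θ-class not containing v0) if and only if u is the unique neighbor of v in I(v0,v). -/

import Mathlib

def interval {V : Type*} (G : SimpleGraph V) (u v : V) : Set V :=
  {x | G.dist u x + G.dist x v = G.dist u v}

def IsMedianGraph {V : Type*} (G : SimpleGraph V) : Prop :=
  G.Connected ∧ ∀ x y z : V,
    ∃! m : V, m ∈ interval G x y ∧ m ∈ interval G y z ∧ m ∈ interval G z x

def Wset {V : Type*} (G : SimpleGraph V) (u v : V) : Set V :=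
  {x | G.dist u x < G.dist v x}

/-- `g` is the gate of `z` in the set `H`. -/
def IsGate {V : Type*} (G : SimpleGraph V) (H : Set V) (z g : V) : Prop :=
  g ∈ H ∧ ∀ x ∈ H, g ∈ interval G x z

/-- In a median graph, distances from two adjacent vertices to any vertex differ. -/
lemma adj_dist_ne' {V : Type*} {G : SimpleGraph V} (hG : IsMedianGraph G)
    {a b : V} (hab : G.Adj a b) (c : V) : G.dist a c ≠ G.dist b c := by
  intro h
  have hcomm : ∀ x y : V, G.dist x y = G.dist y x := fun _ _ => SimpleGraph.dist_comm
  obtain ⟨m, ⟨h1, h2, h3⟩, -⟩ := hG.2 a b c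
  have hab1 : G.dist a b = 1 := SimpleGraph.dist_eq_one_iff_adj.mpr hab
  simp only [interval, Set.mem_setOf_eq] at h1 h2 h3
  rw [hab1] at h1
  rcases Nat.le_one_iff_eq_zero_or_eq_one.mp (le_of_add_le_left h1.le) with h0 | h0
  · -- dist a m = 0, so m = a
    have hma : a = m := hG.1.dist_eq_zero_iff.mp h0
    rw [← hma, hcomm b a, hab1] at h2
    omega
  · have hm0 : G.dist m b = 0 := by omega
    have hmb : m = b := hG.1.dist_eq_zero_iff.mp hm0
    rw [hmb, hcomm c b, hcomm b a, hcomm c a, hab1] at h3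
    omega

/-- First step of a geodesic. -/
lemma exists_adj_step {V : Type*} {G : SimpleGraph V} (hc : G.Connected)
    {a b : V} (h : a ≠ b) : ∃ w, G.Adj a w ∧ G.dist w b + 1 = G.dist a b := by
  have hne : G.dist a b ≠ 0 := (hc.dist_eq_zero_iff).ne.mpr h
  obtain ⟨p, hp⟩ := SimpleGraph.exists_walk_of_dist_ne_zero hne
  cases p with
  | nil => exact absurd rfl h
  | cons hadj q =>
    rename_i w
    refine ⟨w, hadj, ?_⟩
    have h1 : G.dist w b ≤ q.length := SimpleGraph.dist_le q
    have h2 : G.dist a b ≤ G.dist a w + G.dist w b := hc.dist_triangle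
    have h3 : G.dist a w ≤ 1 := by
      rw [SimpleGraph.dist_eq_one_iff_adj.mpr hadj]
    simp [SimpleGraph.Walk.length_cons] at hp
    omega

/-- For an edge `uv` with `d(v0,u) < d(v0,v)`, the halfspace of the `Θ`-class of `uv`
not containing `v0` is `W(v,u)`; the edge is closest to `v0` within its `Θ`-class
(`v` is the gate of `v0` in `W(v,u)`) iff `u` is the unique neighbor of `v` in `I(v0,v)`. -/
theorem first_edge_characterization {V : Type*} [Fintype V] (G : SimpleGraph V)
    (hG : IsMedianGraph G) (v0 u v : V) (huv : G.Adj u v)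
    (hd : G.dist v0 u < G.dist v0 v) :
    IsGate G (Wset G v u) v0 v ↔
      (∀ x : V, G.Adj v x → x ∈ interval G v0 v → x = u) := by
  have hc := hG.1
  have hcomm : ∀ x y : V, G.dist x y = G.dist y x := fun _ _ => SimpleGraph.dist_comm
  have huv1 : G.dist u v = 1 := SimpleGraph.dist_eq_one_iff_adj.mpr huv
  constructor
  · intro hgate x hvx hxI
    by_contra hxu
    simp only [interval, Set.mem_setOf_eq] at hxI
    have hvx1 : G.dist v x = 1 := SimpleGraph.dist_eq_one_iff_adj.mpr hvx
    have hxv1 : G.dist x v = 1 := by rw [hcomm]; exact hvx1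
    have hne : G.dist u x ≠ G.dist v x := adj_dist_ne' hG huv x
    have hne0 : G.dist u x ≠ 0 := (hc.dist_eq_zero_iff).ne.mpr (fun e => hxu e.symm)
    have hxW : x ∈ Wset G v u := by
      simp only [Wset, Set.mem_setOf_eq]
      omega
    have := hgate.2 x hxW
    simp only [interval, Set.mem_setOf_eq] at this
    -- this : dist x v + dist v v0 = dist x v0
    rw [hcomm v v0, hcomm x v0] at this
    omega
  · intro h
    constructor
    · simp only [Wset, Set.mem_setOf_eq, hcomm v u, huv1, SimpleGraph.dist_self]
      omega
    · intro x hx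
      simp only [Wset, Set.mem_setOf_eq] at hx
      obtain ⟨m, ⟨h1, h2, h3⟩, -⟩ := hG.2 v0 v x
      simp only [interval, Set.mem_setOf_eq] at h1 h2 h3
      by_cases hmv : m = v
      · subst hmv
        exact h3
      · exfalso
        obtain ⟨w, hvw, hwm⟩ := exists_adj_step hc (fun e : v = m => hmv e.symm)
        have hvw1 : G.dist v w = 1 := SimpleGraph.dist_eq_one_iff_adj.mpr hvw
        -- w ∈ interval v0 v
        have t1 : G.dist v0 w ≤ G.dist v0 m + G.dist m w := hc.dist_triangle
        have t2 : G.dist v0 v ≤ G.dist v0 w + G.dist w v := hc.dist_triangle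
        have hcwm : G.dist m w = G.dist w m := hcomm ..
        have hcwv : G.dist w v = G.dist v w := hcomm ..
        have hcmv : G.dist m v = G.dist v m := hcomm ..
        have hwI : w ∈ interval G v0 v := by
          simp only [interval, Set.mem_setOf_eq]
          omega
        have hwu : w = u := h w hvw hwI
        rw [hwu] at hwm
        have t3 : G.dist u x ≤ G.dist u m + G.dist m x := hc.dist_triangle
        omega
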